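/- Let A be a k-algebra that is a module algebra over the bialgebra NSymm. Then the maps d_n(a) = Z_n · a form a Hasse-Schmidt derivation on A. Conversely, given a Hasse-Schmidt derivation (d_0 = id, d_1, d_2, ...) on A, setting Z_n · a = d_n(a) defines an NSymm-module algebra structure on A. -/

import Mathlib

open TensorProduct

/-- `NSymm` is the free associative algebra `ℤ⟨Z_1, Z_2, ...⟩`. -/
noncomputable abbrev NSymm : Type := FreeAlgebra ℤ ℕ

noncomputable instance NSymm.instModuleInt : Module ℤ NSymm := Algebra.toModule

/-- `Z 0 = 1` and `Z (n+1)` is the generator `Z_{n+1}` of `NSymm`. -/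
noncomputable def Z : ℕ → NSymm
  | 0 => 1
  | n + 1 => FreeAlgebra.ι ℤ n

/-- The comultiplication of `NSymm`: `μ(Z_n) = Σ_{i+j=n} Z_i ⊗ Z_j`. -/
noncomputable def mu : NSymm →ₐ[ℤ] NSymm ⊗[ℤ] NSymm :=
  FreeAlgebra.lift ℤ fun n => ∑ i ∈ Finset.range (n + 2), Z i ⊗ₜ[ℤ] Z (n + 1 - i)

/-- Given an action `ρ` of `NSymm` on `A` by additive endomorphisms and `a b : A`,
the linear map `NSymm ⊗ NSymm → A`, `h₁ ⊗ h₂ ↦ (h₁ · a)(h₂ · b)` appearing in the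
Sweedler-notation module-algebra condition. -/
noncomputable def sweedler {A : Type*} [Ring A] (ρ : NSymm →+* AddMonoid.End A)
    (a b : A) : NSymm ⊗[ℤ] NSymm →ₗ[ℤ] A :=
  TensorProduct.lift <| LinearMap.mk₂ ℤ (fun h₁ h₂ => ρ h₁ a * ρ h₂ b)
    (fun h₁ h₂ h => by
      show (ρ (h₁ + h₂)) a * _ = _
      rw [map_add]; show (ρ h₁ a + ρ h₂ a) * _ = _; rw [add_mul])
    (fun c h₁ h => by
      show (ρ (c • h₁)) a * _ = _
      rw [map_zsmul]; show (c • (ρ h₁ a)) * _ = _; rw [smul_mul_assoc])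
    (fun h h₁ h₂ => by
      show _ * (ρ (h₁ + h₂)) b = _
      rw [map_add]; show _ * (ρ h₁ b + ρ h₂ b) = _; rw [mul_add])
    (fun c h h₂ => by
      show _ * (ρ (c • h₂)) b = _
      rw [map_zsmul]; show _ * (c • (ρ h₂ b)) = _; rw [mul_smul_comm])


lemma sweedler_tmul {A : Type*} [Ring A] (ρ : NSymm →+* AddMonoid.End A) (a b : A)
    (x y : NSymm) : sweedler ρ a b (x ⊗ₜ[ℤ] y) = ρ x a * ρ y b := rfl

lemma sweedler_mul_tmul {A : Type*} [Ring A] (ρ : NSymm →+* AddMonoid.End A) (a b : A)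
    (x y : NSymm) (s : NSymm ⊗[ℤ] NSymm) :
    sweedler ρ a b (s * (x ⊗ₜ[ℤ] y)) = sweedler ρ (ρ x a) (ρ y b) s := by
  induction s using TensorProduct.induction_on with
  | zero => simp
  | tmul u v => simp [Algebra.TensorProduct.tmul_mul_tmul, sweedler_tmul]
  | add s t hs ht => rw [add_mul, map_add, map_add, hs, ht]

lemma rho_sweedler {A : Type*} [Ring A] (ρ : NSymm →+* AddMonoid.End A) (h₁ : NSymm)
    (H : ∀ a b : A, ρ h₁ (a * b) = sweedler ρ a b (mu h₁)) (a b : A)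
    (t : NSymm ⊗[ℤ] NSymm) :
    ρ h₁ (sweedler ρ a b t) = sweedler ρ a b (mu h₁ * t) := by
  induction t using TensorProduct.induction_on with
  | zero => simp
  | tmul x y => rw [sweedler_tmul, H, sweedler_mul_tmul]
  | add s t hs ht => rw [map_add, mul_add, map_add, map_add, hs, ht]

/-- An `NSymm`-module algebra structure on `A` (an action `ρ` of the algebra `NSymm` by
additive endomorphisms satisfying the module-algebra condition with respect to the
coproduct `mu`) with `ρ (Z n) = d n` is precisely the same thing as a Hasse-Schmidt
derivation `(d 0 = id, d 1, d 2, ...)` on `A`. -/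
theorem stmt_4 {A : Type*} [Ring A] (d : ℕ → AddMonoid.End A) (hd0 : d 0 = 1) :
    (∃ ρ : NSymm →+* AddMonoid.End A,
        (∀ n : ℕ, ρ (Z (n + 1)) = d (n + 1)) ∧
        ∀ (h : NSymm) (a b : A), ρ h (a * b) = sweedler ρ a b (mu h)) ↔
      (∀ n, 1 ≤ n → ∀ a b : A,
        d n (a * b) = ∑ i ∈ Finset.range (n + 1), d i a * d (n - i) b) := by
  constructor
  · rintro ⟨ρ, hZ, hmod⟩ n hn a b
    obtain ⟨m, rfl⟩ := Nat.exists_eq_add_of_le hn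
    have hZ' : ∀ i, ρ (Z i) = d i := by
      intro i
      cases i with
      | zero => simp [Z, hd0, map_one ρ]
      | succ i => exact hZ i
    have : (Z (1 + m)) = FreeAlgebra.ι ℤ m := by
      rw [add_comm]; rfl
    rw [← hZ' (1 + m), this, hmod, mu, FreeAlgebra.lift_ι_apply, map_sum]
    rw [add_comm 1 m]
    refine Finset.sum_congr rfl fun i hi => ?_
    rw [sweedler_tmul, hZ', hZ']
  · intro H
    let ρA : NSymm →ₐ[ℤ] AddMonoid.End A := FreeAlgebra.lift ℤ fun n => d (n + 1)
    refine ⟨ρA.toRingHom, fun n => FreeAlgebra.lift_ι_apply _ _, ?_⟩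
    set ρ := ρA.toRingHom with hρ
    have hZ' : ∀ i, ρ (Z i) = d i := by
      intro i
      cases i with
      | zero => simp [Z, hd0, map_one ρ]
      | succ i => exact FreeAlgebra.lift_ι_apply _ _
    intro h
    induction h using FreeAlgebra.induction with
    | grade0 r =>
      intro a b
      have h1 : ρ (algebraMap ℤ NSymm r) = r • (1 : AddMonoid.End A) := by
        rw [show ρ (algebraMap ℤ NSymm r) = ρA (algebraMap ℤ NSymm r) from rfl,
          AlgHom.commutes, Algebra.algebraMap_eq_smul_one]
      have h2 : mu (algebraMap ℤ NSymm r) = r • ((1 : NSymm) ⊗ₜ[ℤ] (1 : NSymm)) := by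
        rw [AlgHom.commutes, Algebra.algebraMap_eq_smul_one, Algebra.TensorProduct.one_def]
        rfl
      rw [h1, h2, map_zsmul, sweedler_tmul,
        show (ρ 1 : AddMonoid.End A) = 1 from map_one ρ]
      rfl
    | grade1 x =>
      intro a b
      have hx : FreeAlgebra.ι ℤ x = Z (x + 1) := rfl
      rw [hx, hZ', H (x + 1) (Nat.succ_le_succ (Nat.zero_le x)), ← hx, mu,
        FreeAlgebra.lift_ι_apply, map_sum]
      refine Finset.sum_congr rfl fun i hi => ?_
      rw [sweedler_tmul, hZ', hZ']
    | mul h₁ h₂ ih₁ ih₂ =>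
      intro a b
      have hm : ρ (h₁ * h₂) = ρ h₁ * ρ h₂ := map_mul ρ h₁ h₂
      have : ρ (h₁ * h₂) (a * b) = ρ h₁ (ρ h₂ (a * b)) := by rw [hm]; rfl
      rw [this, ih₂, rho_sweedler ρ h₁ ih₁, ← map_mul]
    | add h₁ h₂ ih₁ ih₂ =>
      intro a b
      rw [map_add, map_add, map_add]
      show ρ h₁ (a * b) + ρ h₂ (a * b) = _
      rw [ih₁, ih₂]
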